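/- Let φ be the Laplace transform of a probability distribution on [0,∞) satisfying φ(t) ≤ E ∏_{|v|=n} φ(L(v)t) for all t ≥ 0 and n, and suppose that L_n* := sup_{|v|=n} L(v) → ∞ almost surely on an event S with P(S) = 1 − q > 0. Then φ(t) ≤ q + (1−q)φ(∞) for all t > 0, where φ(∞) := lim_{s→∞} φ(s); consequently, by continuity of φ at 0 with φ(0) = 1, φ ≡ 1, i.e., the underlying distribution is the point mass at 0. -/

import Mathlib

open MeasureTheory ProbabilityTheory ENNReal NNReal Filter

noncomputable section

abbrev UHTree := List ℕ

/-- The branch weight `L(v)`: `L(∅) = 1`, `L(vi) = L(v) T_i(v)`. -/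
def branchL {Ω : Type*} : (UHTree → ℕ → Ω → ℝ≥0∞) → UHTree → Ω → ℝ≥0∞
  | _, [], _ => 1
  | T, i :: v, ω => T (.nil) i ω * branchL (fun u j => T (i :: u) j) v ω

/-- The random pair `(C(v), T(v))` attached to vertex `v`. -/
def pairRV {Ω : Type*} (C : UHTree → Ω → ℝ≥0∞) (T : UHTree → ℕ → Ω → ℝ≥0∞) (v : UHTree)
    (ω : Ω) : ℝ≥0∞ × (ℕ → ℝ≥0∞) :=
  (C v ω, fun i => T v i ω)

/-- `e^{-y}` for `y ∈ [0,∞]`, with `e^{-∞} = 0`. -/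
def eexp (y : ℝ≥0∞) : ℝ := if y = ∞ then 0 else Real.exp (-y.toReal)

/-- The multiplicative martingale
`M_n(t) = exp(-t Σ_{|u|<n} L(u)C(u)) ∏_{|v|=n} ψ(L(v)t)`. -/
def multMart {Ω : Type*} (C : UHTree → Ω → ℝ≥0∞) (T : UHTree → ℕ → Ω → ℝ≥0∞)
    (ψ : ℝ≥0∞ → ℝ) (n : ℕ) (t : ℝ≥0) (ω : Ω) : ℝ :=
  eexp ((t : ℝ≥0∞) * ∑' u : {u : UHTree // u.length < n}, branchL T u ω * C u ω) *
    ∏' v : {v : UHTree // v.length = n}, ψ (branchL T v ω * t)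

/-- The σ-algebra generated by the weights attached to vertices of length `< n`. -/
def treeFiltration {Ω : Type*} (C : UHTree → Ω → ℝ≥0∞) (T : UHTree → ℕ → Ω → ℝ≥0∞)
    (n : ℕ) : MeasurableSpace Ω :=
  ⨆ v : {v : UHTree // v.length < n}, MeasurableSpace.comap (pairRV C T v) inferInstance

/-- Maximal branch weight in generation `n`. -/
def Lstar {Ω : Type*} (T : UHTree → ℕ → Ω → ℝ≥0∞) (n : ℕ) (ω : Ω) : ℝ≥0∞ :=
  ⨆ v : {v : UHTree // v.length = n}, branchL T v ω

/- AUXILIARY LEMMAS -/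

lemma eexp_zero' : eexp 0 = 1 := by simp [eexp]

lemma eexp_nonneg (y : ℝ≥0∞) : 0 ≤ eexp y := by
  unfold eexp; split <;> positivity

lemma eexp_le_one (y : ℝ≥0∞) : eexp y ≤ 1 := by
  unfold eexp; split
  · norm_num
  · rw [show (1:ℝ) = Real.exp 0 by simp]
    exact Real.exp_le_exp.2 (by simp [ENNReal.toReal_nonneg])

lemma eexp_anti {y y' : ℝ≥0∞} (h : y ≤ y') : eexp y' ≤ eexp y := by
  unfold eexp
  by_cases hy' : y' = ∞
  · simp only [hy', if_true]; split <;> positivity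
  · have hy : y ≠ ∞ := fun h' => hy' (top_le_iff.1 (h' ▸ h))
    simp only [hy, hy', if_false]
    exact Real.exp_le_exp.2 (by simpa using ENNReal.toReal_mono hy' h)

lemma measurable_eexp : Measurable eexp := by
  unfold eexp
  exact Measurable.ite (measurableSet_singleton _) measurable_const
    ((Real.continuous_exp.measurable).comp (ENNReal.measurable_toReal.neg))

lemma eexp_eq_one_iff {y : ℝ≥0∞} : eexp y = 1 ↔ y = 0 := by
  unfold eexp
  constructor
  · intro h
    by_cases hy : y = ∞
    · simp [hy] at h
    · simp only [hy, if_false] at h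
      rw [show (1:ℝ) = Real.exp 0 by simp, Real.exp_eq_exp, neg_eq_zero] at h
      exact ((ENNReal.toReal_eq_zero_iff y).1 h).resolve_right hy
  · rintro rfl; simp

lemma tendsto_eexp {y : ℝ≥0∞} (hy : y ≠ ∞) :
    Filter.Tendsto eexp (nhds y) (nhds (eexp y)) := by
  have h1 : ∀ᶠ z in nhds y, eexp z = Real.exp (-z.toReal) := by
    filter_upwards [IsOpen.mem_nhds isOpen_compl_singleton
      (by simpa using hy : y ∈ ({∞}ᶜ : Set ℝ≥0∞))] with z hz
    simp only [Set.mem_compl_iff, Set.mem_singleton_iff] at hz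
    simp [eexp, hz]
  have h2 : Filter.Tendsto (fun z : ℝ≥0∞ => Real.exp (-z.toReal)) (nhds y)
      (nhds (Real.exp (-y.toReal))) :=
    (Real.continuous_exp.tendsto _).comp ((ENNReal.tendsto_toReal hy).neg)
  have h3 : eexp y = Real.exp (-y.toReal) := by simp [eexp, hy]
  rw [h3]
  exact h2.congr' (by filter_upwards [h1] with z hz using hz.symm)

lemma prod_antitone {ι : Type*} [DecidableEq ι] {f : ι → ℝ} (h0 : ∀ i, 0 ≤ f i)
    (h1 : ∀ i, f i ≤ 1) : Antitone (fun F : Finset ι => ∏ i ∈ F, f i) := by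
  intro F F' h
  calc ∏ i ∈ F', f i = (∏ i ∈ F' \ F, f i) * ∏ i ∈ F, f i := (Finset.prod_sdiff h).symm
  _ ≤ 1 * ∏ i ∈ F, f i := by
      apply mul_le_mul_of_nonneg_right _ (Finset.prod_nonneg fun i _ => h0 i)
      exact Finset.prod_le_one (fun i _ => h0 i) (fun i _ => h1 i)
  _ = ∏ i ∈ F, f i := one_mul _

lemma hasProd_of_le_one {ι : Type*} {f : ι → ℝ} (h0 : ∀ i, 0 ≤ f i) (h1 : ∀ i, f i ≤ 1) :
    HasProd f (⨅ F : Finset ι, ∏ i ∈ F, f i) := by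
  classical
  exact tendsto_atTop_ciInf (prod_antitone h0 h1)
    ⟨0, by rintro x ⟨F, rfl⟩; exact Finset.prod_nonneg fun i _ => h0 i⟩

lemma tprod_le_single {ι : Type*} {f : ι → ℝ} (h0 : ∀ i, 0 ≤ f i) (h1 : ∀ i, f i ≤ 1)
    (i₀ : ι) : ∏' i, f i ≤ f i₀ := by
  rw [(hasProd_of_le_one h0 h1).tprod_eq]
  have hbdd : BddBelow (Set.range fun F : Finset ι => ∏ i ∈ F, f i) := by
    refine ⟨0, ?_⟩
    rintro x ⟨F, rfl⟩
    exact Finset.prod_nonneg fun i _ => h0 i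
  refine ciInf_le_of_le hbdd {i₀} ?_
  simp

lemma tprod_le_one' {ι : Type*} {f : ι → ℝ} (h0 : ∀ i, 0 ≤ f i) (h1 : ∀ i, f i ≤ 1) :
    ∏' i, f i ≤ 1 := by
  rw [(hasProd_of_le_one h0 h1).tprod_eq]
  have hbdd : BddBelow (Set.range fun F : Finset ι => ∏ i ∈ F, f i) := by
    refine ⟨0, ?_⟩
    rintro x ⟨F, rfl⟩
    exact Finset.prod_nonneg fun i _ => h0 i
  refine ciInf_le_of_le hbdd ∅ ?_
  simp

lemma measurable_branchL {Ω : Type*} [MeasurableSpace Ω] :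
    ∀ (v : UHTree) (T : UHTree → ℕ → Ω → ℝ≥0∞), (∀ u i, Measurable (T u i)) →
      Measurable (branchL T v)
  | [], T, h => by simpa [branchL] using measurable_const
  | i :: v, T, h =>
    (h .nil i).mul (measurable_branchL v (fun u j => T (i :: u) j) (fun u j => h _ j))

section phiAux

variable (P : Measure ℝ≥0∞) [IsProbabilityMeasure P] (φ : ℝ≥0∞ → ℝ)
  (hφ : ∀ y, φ y = ∫ x, eexp (y * x) ∂P)

lemma integrable_eexp_mul (y : ℝ≥0∞) : Integrable (fun x => eexp (y * x)) P := by
  refine (integrable_const (1:ℝ)).mono'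
    ((measurable_eexp.comp (measurable_const.mul measurable_id)).aestronglyMeasurable) ?_
  exact ae_of_all _ fun x => by
    rw [Real.norm_eq_abs, abs_of_nonneg (eexp_nonneg _)]; exact eexp_le_one _

include hφ

lemma phi_nonneg (y : ℝ≥0∞) : 0 ≤ φ y := by
  rw [hφ]; exact integral_nonneg fun x => eexp_nonneg _

lemma phi_le_one (y : ℝ≥0∞) : φ y ≤ 1 := by
  rw [hφ]
  calc ∫ x, eexp (y * x) ∂P ≤ ∫ _, (1:ℝ) ∂P :=
        integral_mono (integrable_eexp_mul P y) (integrable_const 1) fun x => eexp_le_one _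
  _ = 1 := by simp

lemma phi_zero : φ 0 = 1 := by
  rw [hφ]; simp [eexp_zero']

lemma phi_anti : Antitone φ := by
  intro y y' h
  rw [hφ, hφ]
  exact integral_mono (integrable_eexp_mul P y') (integrable_eexp_mul P y)
    fun x => eexp_anti (mul_le_mul_left h x)

lemma phi_cont_zero (hPtop : P {∞} = 0) :
    Filter.Tendsto (fun t : ℝ≥0 => φ (t : ℝ≥0∞)) (nhds 0) (nhds 1) := by
  have h1 : (1:ℝ) = ∫ x, eexp ((0:ℝ≥0∞) * x) ∂P := by simp [eexp_zero']
  rw [show (nhds (1:ℝ)) = nhds (∫ x, eexp ((0:ℝ≥0∞) * x) ∂P) by rw [← h1]]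
  simp only [hφ]
  refine tendsto_integral_filter_of_dominated_convergence (fun _ => (1:ℝ))
    (Filter.Eventually.of_forall fun t =>
      (measurable_eexp.comp (measurable_const.mul measurable_id)).aestronglyMeasurable)
    (Filter.Eventually.of_forall fun t => ae_of_all _ fun x => by
      rw [Real.norm_eq_abs, abs_of_nonneg (eexp_nonneg _)]; exact eexp_le_one _)
    (integrable_const 1) ?_
  have hae : ∀ᵐ x ∂P, x ≠ ∞ := by rw [ae_iff]; simpa using hPtop
  filter_upwards [hae] with x hx
  have hmul : Filter.Tendsto (fun t : ℝ≥0 => (t : ℝ≥0∞) * x) (nhds 0)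
      (nhds ((0:ℝ≥0∞) * x)) :=
    ENNReal.Tendsto.mul_const (ENNReal.tendsto_coe.2 tendsto_id) (Or.inr hx)
  exact (tendsto_eexp (by simp)).comp (by simpa using hmul)

end phiAux


theorem exploding_weights_force_trivial_solution
    {Ω : Type*} [MeasurableSpace Ω] (μ : Measure Ω) [IsProbabilityMeasure μ]
    (C : UHTree → Ω → ℝ≥0∞) (T : UHTree → ℕ → Ω → ℝ≥0∞)
    (hmeas : ∀ v, Measurable (pairRV C T v))
    (P : Measure ℝ≥0∞) [IsProbabilityMeasure P] (hPtop : P {∞} = 0)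
    (φ : ℝ≥0∞ → ℝ) (hφ : ∀ y, φ y = ∫ x, eexp (y * x) ∂P)
    (hsub : ∀ (t : ℝ≥0) (n : ℕ),
      φ t ≤ ∫ ω, ∏' v : {v : UHTree // v.length = n}, φ (branchL T v ω * t) ∂μ)
    (S : Set Ω) (hS : MeasurableSet S) (hSpos : 0 < μ S)
    (hLstar : ∀ᵐ ω ∂μ, ω ∈ S →
      Tendsto (fun n => Lstar T n ω) atTop (nhds (∞ : ℝ≥0∞)))
    (l : ℝ) (hl : Tendsto (fun t : ℝ≥0 => φ t) atTop (nhds l)) :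
    (∀ t : ℝ≥0, 0 < t → φ t ≤ (μ Sᶜ).toReal + (μ S).toReal * l)
    ∧ (∀ t : ℝ≥0, φ t = 1)
    ∧ P = Measure.dirac 0 := by
  classical
  have hint : ∀ y, Integrable (fun x => eexp (y * x)) P := integrable_eexp_mul P
  have h0 : ∀ y, 0 ≤ φ y := phi_nonneg P φ hφ
  have h1 : ∀ y, φ y ≤ 1 := phi_le_one P φ hφ
  have hanti : Antitone φ := phi_anti P φ hφ
  have hμS_ne_top : μ S ≠ ∞ := measure_ne_top μ S
  have hTmeas : ∀ v i, Measurable fun ω => T v i ω := fun v i =>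
    (measurable_pi_apply i).comp (measurable_snd.comp (hmeas v))
  have hbL : ∀ v : UHTree, Measurable (branchL T v) := fun v =>
    measurable_branchL v T hTmeas
  have hLstar_meas : ∀ n, Measurable (Lstar T n) := by
    intro n
    unfold Lstar
    exact Measurable.iSup fun v => hbL v.1
  -- Part 1
  have part1 : ∀ t : ℝ≥0, 0 < t → φ t ≤ (μ Sᶜ).toReal + (μ S).toReal * l := by
    intro t ht
    have key : ∀ s : ℝ≥0, φ (t : ℝ≥0∞) ≤ (μ Sᶜ).toReal + (μ S).toReal * φ s := by
      intro s
      refine le_of_forall_pos_le_add fun ε hε => ?_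
      set A : ℕ → Set Ω := fun n => {ω | (s : ℝ≥0∞) < Lstar T n ω * t} with hA
      have hAmeas : ∀ n, MeasurableSet (A n) :=
        fun n => measurableSet_lt measurable_const ((hLstar_meas n).mul_const _)
      set D : ℕ → Set Ω := fun n => S ∩ ⋂ m, ⋂ (_ : n ≤ m), A m with hD
      have hDmeas : ∀ n, MeasurableSet (D n) := fun n =>
        hS.inter (MeasurableSet.iInter fun m => MeasurableSet.iInter fun _ => hAmeas m)
      have hDmono : Monotone D := by
        intro a b hab ω hω
        refine ⟨hω.1, Set.mem_iInter.2 fun m => Set.mem_iInter.2 fun hm => ?_⟩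
        exact Set.mem_iInter.1 (Set.mem_iInter.1 hω.2 m) (hab.trans hm)
      have hDsubA : ∀ n, D n ⊆ A n := fun n ω hω =>
        Set.mem_iInter.1 (Set.mem_iInter.1 hω.2 n) le_rfl
      have hDsubS : ∀ n, D n ⊆ S := fun n => Set.inter_subset_left
      have hUnion : μ (⋃ n, D n) = μ S := by
        refine le_antisymm (measure_mono (Set.iUnion_subset hDsubS)) ?_
        refine measure_mono_ae ?_
        filter_upwards [hLstar] with ω hω hωS
        have htend : Tendsto (fun n => Lstar T n ω * (t : ℝ≥0∞)) atTop (nhds ∞) := by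
          have := ENNReal.Tendsto.mul_const (b := (t:ℝ≥0∞)) (hω hωS) (Or.inl (by simp : (∞:ℝ≥0∞) ≠ 0))
          rwa [ENNReal.top_mul (by exact_mod_cast ht.ne' : (t:ℝ≥0∞) ≠ 0)] at this
        have hev : ∀ᶠ n in atTop, (s : ℝ≥0∞) < Lstar T n ω * t :=
          htend.eventually (eventually_gt_nhds ENNReal.coe_lt_top)
        obtain ⟨N, hN⟩ := eventually_atTop.1 hev
        exact Set.mem_iUnion.2 ⟨N, hωS, Set.mem_iInter.2 fun m => Set.mem_iInter.2 fun hm => hN m hm⟩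
      have htendD : Tendsto (fun n => (μ (D n)).toReal) atTop (nhds (μ S).toReal) := by
        have h := tendsto_measure_iUnion_atTop (μ := μ) hDmono
        rw [hUnion] at h
        exact (ENNReal.tendsto_toReal hμS_ne_top).comp h
      obtain ⟨n, hn⟩ : ∃ n, (μ S).toReal - ε < (μ (D n)).toReal :=
        (htendD.eventually (eventually_gt_nhds (by linarith))).exists
      have hSdiffA : (μ (S \ A n)).toReal ≤ ε := by
        have h1' : μ (S \ A n) ≤ μ (S \ D n) :=
          measure_mono (Set.diff_subset_diff_right (hDsubA n))
        have h2' : μ (S \ D n) = μ S - μ (D n) :=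
          measure_diff (hDsubS n) (hDmeas n).nullMeasurableSet (measure_ne_top μ _)
        have h3' : (μ (S \ D n)).toReal = (μ S).toReal - (μ (D n)).toReal := by
          rw [h2', ENNReal.toReal_sub_of_le (measure_mono (hDsubS n)) hμS_ne_top]
        have h4' : (μ (S \ A n)).toReal ≤ (μ (S \ D n)).toReal :=
          ENNReal.toReal_mono (measure_ne_top μ _) h1'
        linarith
      -- per-n bound
      set G : Ω → ℝ := fun ω => ∏' v : {v : UHTree // v.length = n}, φ (branchL T v ω * t)
        with hG
      have hφt_le : φ (t : ℝ≥0∞) ≤ ∫ ω, G ω ∂μ := hsub t n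
      set b : Ω → ℝ := fun ω => (S ∩ A n).indicator (fun _ => φ s) ω
        + ((S ∩ A n)ᶜ).indicator (fun _ => (1:ℝ)) ω with hb
      have hGleb : ∀ ω, G ω ≤ b ω := by
        intro ω
        by_cases hω : ω ∈ S ∩ A n
        · have hlt : (s : ℝ≥0∞) < Lstar T n ω * t := hω.2
          rw [show Lstar T n ω * (t:ℝ≥0∞)
              = ⨆ v : {v : UHTree // v.length = n}, branchL T v ω * t from ENNReal.iSup_mul _ _]
            at hlt
          obtain ⟨v, hv⟩ := lt_iSup_iff.1 hlt
          have hGle : G ω ≤ φ (branchL T v ω * t) :=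
            tprod_le_single (fun u => h0 _) (fun u => h1 _) v
          have : G ω ≤ φ s := hGle.trans (hanti hv.le)
          simp only [hb, Set.indicator_of_mem hω,
            Set.indicator_of_notMem (by simpa using hω : ω ∉ (S ∩ A n)ᶜ), add_zero]
          exact this
        · have : G ω ≤ 1 := tprod_le_one' (fun u => h0 _) (fun u => h1 _)
          simp only [hb, Set.indicator_of_notMem hω,
            Set.indicator_of_mem (Set.mem_compl hω), zero_add]
          exact this
      have hbmeas : MeasurableSet (S ∩ A n) := hS.inter (hAmeas n)
      have hbint1 : Integrable ((S ∩ A n).indicator (fun _ => φ s)) μ :=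
        (integrable_const _).indicator hbmeas
      have hbint2 : Integrable (((S ∩ A n)ᶜ).indicator (fun _ => (1:ℝ))) μ :=
        (integrable_const _).indicator hbmeas.compl
      have hbint : Integrable b μ := hbint1.add hbint2
      have hintb : ∫ ω, b ω ∂μ = φ s * (μ (S ∩ A n)).toReal + (μ ((S ∩ A n)ᶜ)).toReal := by
        rw [hb]
        rw [integral_add hbint1 hbint2, integral_indicator_const _ hbmeas,
          integral_indicator_const _ hbmeas.compl]
        simp [mul_comm, measureReal_def]
      have hintG : ∫ ω, G ω ∂μ ≤ φ s * (μ (S ∩ A n)).toReal + (μ ((S ∩ A n)ᶜ)).toReal := by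
        by_cases hGint : Integrable G μ
        · rw [← hintb]; exact integral_mono hGint hbint hGleb
        · rw [integral_undef hGint]
          exact add_nonneg (mul_nonneg (h0 _) ENNReal.toReal_nonneg) ENNReal.toReal_nonneg
      have hcompl : (μ ((S ∩ A n)ᶜ)).toReal ≤ (μ Sᶜ).toReal + (μ (S \ A n)).toReal := by
        have hsub' : (S ∩ A n)ᶜ ⊆ Sᶜ ∪ (S \ A n) := by
          intro ω hω
          by_cases hωS : ω ∈ S
          · exact Or.inr ⟨hωS, fun hωA => hω ⟨hωS, hωA⟩⟩
          · exact Or.inl hωS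
        calc (μ ((S ∩ A n)ᶜ)).toReal ≤ (μ (Sᶜ ∪ (S \ A n))).toReal :=
              ENNReal.toReal_mono (measure_ne_top μ _) (measure_mono hsub')
        _ ≤ ((μ Sᶜ) + μ (S \ A n)).toReal :=
              ENNReal.toReal_mono (by finiteness) (measure_union_le _ _)
        _ = (μ Sᶜ).toReal + (μ (S \ A n)).toReal :=
              ENNReal.toReal_add (measure_ne_top μ _) (measure_ne_top μ _)
      have hmono : φ s * (μ (S ∩ A n)).toReal ≤ φ s * (μ S).toReal :=
        mul_le_mul_of_nonneg_left
          (ENNReal.toReal_mono hμS_ne_top (measure_mono Set.inter_subset_left)) (h0 _)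
      have hfinal := hφt_le.trans hintG
      have hmc : (μ S).toReal * φ (s:ℝ≥0∞) = φ (s:ℝ≥0∞) * (μ S).toReal := mul_comm _ _
      linarith
    -- let s → ∞
    have hlim : Tendsto (fun s : ℝ≥0 => (μ Sᶜ).toReal + (μ S).toReal * φ s) atTop
        (nhds ((μ Sᶜ).toReal + (μ S).toReal * l)) :=
      tendsto_const_nhds.add (hl.const_mul _)
    exact ge_of_tendsto' hlim key
  -- Part 2
  have hq : (μ Sᶜ).toReal = 1 - (μ S).toReal := by
    rw [prob_compl_eq_one_sub hS,
      ENNReal.toReal_sub_of_le prob_le_one ENNReal.one_ne_top, ENNReal.toReal_one]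
  have hp : 0 < (μ S).toReal := ENNReal.toReal_pos hSpos.ne' hμS_ne_top
  have hl_le1 : l ≤ 1 := le_of_tendsto' hl fun t => h1 _
  have hcont : Tendsto (fun t : ℝ≥0 => φ (t : ℝ≥0∞)) (nhdsWithin 0 (Set.Ioi 0)) (nhds 1) :=
    (phi_cont_zero P φ hφ hPtop).mono_left nhdsWithin_le_nhds
  have hone_le : 1 ≤ (μ Sᶜ).toReal + (μ S).toReal * l := by
    refine le_of_tendsto hcont ?_
    filter_upwards [eventually_mem_nhdsWithin] with t ht
    exact part1 t ht
  have hl1 : l = 1 := by nlinarith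
  have part2 : ∀ t : ℝ≥0, φ t = 1 := by
    intro t
    have hlle : l ≤ φ (t : ℝ≥0∞) := by
      refine le_of_tendsto hl ?_
      filter_upwards [eventually_ge_atTop t] with s hs
      exact hanti (by exact_mod_cast hs)
    linarith [h1 (t : ℝ≥0∞)]
  -- Part 3
  have hφ1 : φ 1 = 1 := by
    have := part2 1
    simpa using this
  have hint1 : ∫ x, eexp x ∂P = 1 := by
    have := hφ 1
    simp only [one_mul] at this
    rw [← this, hφ1]
  have hinteexp : Integrable eexp P := by
    have := hint (1 : ℝ≥0∞)
    simpa using this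
  have hae0 : ∀ᵐ x ∂P, x = 0 := by
    have hnn : 0 ≤ fun x : ℝ≥0∞ => 1 - eexp x := fun x => sub_nonneg.2 (eexp_le_one x)
    have hfint : Integrable (fun x : ℝ≥0∞ => 1 - eexp x) P := (integrable_const 1).sub hinteexp
    have hzero : ∫ x, (1 - eexp x) ∂P = 0 := by
      rw [integral_sub (integrable_const 1) hinteexp, hint1]
      simp
    have := (integral_eq_zero_iff_of_nonneg hnn hfint).1 hzero
    filter_upwards [this] with x hx
    simp only [Pi.zero_apply, sub_eq_zero] at hx
    exact eexp_eq_one_iff.1 hx.symm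
  have hcompl0 : P ({(0:ℝ≥0∞)}ᶜ) = 0 := by
    have h := hae0
    rw [ae_iff] at h
    have hset : {x : ℝ≥0∞ | ¬ x = 0} = ({0} : Set ℝ≥0∞)ᶜ := by ext x; simp
    rwa [hset] at h
  refine ⟨part1, part2, ?_⟩
  ext s hs
  rw [Measure.dirac_apply' _ hs]
  by_cases h0s : (0:ℝ≥0∞) ∈ s
  · have hsubc : sᶜ ⊆ ({0} : Set ℝ≥0∞)ᶜ := by
      intro x hx hx0
      rw [Set.mem_singleton_iff] at hx0
      exact hx (hx0.symm ▸ h0s)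
    have hsc : P sᶜ = 0 := measure_mono_null hsubc hcompl0
    have hadd : P s + P sᶜ = 1 := by rw [measure_add_measure_compl hs, measure_univ]
    rw [Set.indicator_of_mem h0s]
    simp only [Pi.one_apply]
    rw [hsc, add_zero] at hadd
    exact hadd
  · have hP0 : P s = 0 :=
      measure_mono_null (fun x hx (hx0 : x ∈ ({0} : Set ℝ≥0∞)) =>
        h0s (Set.mem_singleton_iff.1 hx0 ▸ hx)) hcompl0
    rw [Set.indicator_of_notMem h0s, hP0]
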